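/- For any matrix A and any 1 ≤ i ≤ m, 1 ≤ j ≤ n, the row rank profile of the leading i×j submatrix of A equals the row support of the leading i×j submatrix of the rank profile matrix of A. -/

import Mathlib

open Matrix

/-- The leading `i×j` submatrix of a matrix. -/
def leadSub {K : Type*} [Field K] {m n : ℕ} (A : Matrix (Fin m) (Fin n) K) {i j : ℕ}
    (hi : i ≤ m) (hj : j ≤ n) : Matrix (Fin i) (Fin j) K :=
  A.submatrix (Fin.castLE hi) (Fin.castLE hj)

/-- An `r`-sub-permutation matrix: rank `r` with exactly `r` nonzero entries, all equal to 1. -/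
def IsSubPerm {K : Type*} [Field K] {m n : ℕ} (r : ℕ) (R : Matrix (Fin m) (Fin n) K) : Prop :=
  (∀ i j, R i j = 0 ∨ R i j = 1) ∧
  {p : Fin m × Fin n | R p.1 p.2 ≠ 0}.ncard = r ∧
  R.rank = r

/-- `R` is the rank profile matrix of `A`: the rank(A)-sub-permutation matrix each of whose
leading submatrices has the same rank as the corresponding leading submatrix of `A`. -/
def IsRPM {K : Type*} [Field K] {m n : ℕ} (A R : Matrix (Fin m) (Fin n) K) : Prop :=
  IsSubPerm A.rank R ∧
  ∀ (i j : ℕ) (hi : i ≤ m) (hj : j ≤ n),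
    (leadSub R hi hj).rank = (leadSub A hi hj).rank

/-- `S` is the row rank profile of `A`: the lexicographically smallest set of
`rank A` indices of linearly independent rows of `A`. -/
def IsRowRP {K : Type*} [Field K] {m n : ℕ} (A : Matrix (Fin m) (Fin n) K)
    (S : Finset (Fin m)) : Prop :=
  S.card = A.rank ∧ LinearIndependent K (fun i : S => A i) ∧
  ∀ T : Finset (Fin m), T.card = A.rank → LinearIndependent K (fun i : T => A i) →
    S = T ∨ List.Lex (· < ·) (S.sort (· ≤ ·)) (T.sort (· ≤ ·))

open Classical in
/-- Row support: the set of indices of nonzero rows. -/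
noncomputable def rowSupp {K : Type*} [Field K] {m n : ℕ}
    (R : Matrix (Fin m) (Fin n) K) : Finset (Fin m) :=
  Finset.univ.filter fun i => ∃ j, R i j ≠ 0

/-- The m×n block matrix [[I_r, 0], [0, 0]]. -/
def Jb (K : Type*) [Field K] (m n r : ℕ) : Matrix (Fin m) (Fin n) K :=
  Matrix.of fun i j => if (i : ℕ) = (j : ℕ) ∧ (i : ℕ) < r then 1 else 0

/-- The pivoting matrix `Π_{P,Q} = P [[I_r,0],[0,0]] Q` of a PLUQ decomposition of rank r. -/
noncomputable def PivMat (K : Type*) [Field K] {m n : ℕ}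
    (σ : Equiv.Perm (Fin m)) (τ : Equiv.Perm (Fin n)) (r : ℕ) : Matrix (Fin m) (Fin n) K :=
  σ.permMatrix K * Jb K m n r * τ.permMatrix K

/-- A permutation of `Fin n` is `k`-monotonically increasing if its last `n-k`
values form a strictly increasing sequence. -/
def MonoInc {n : ℕ} (k : ℕ) (σ : Equiv.Perm (Fin n)) : Prop :=
  ∀ a b : Fin n, k ≤ (a : ℕ) → a < b → σ a < σ b


section RPMAux
open Submodule Module

variable {K : Type*} [Field K]

lemma rpm_mem_rowSupp {m n : ℕ} {M : Matrix (Fin m) (Fin n) K}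
    {i : Fin m} : i ∈ rowSupp M ↔ ∃ j, M i j ≠ 0 := by simp [rowSupp]

lemma rpm_span_range_eq_span_supp {m n : ℕ} (M : Matrix (Fin m) (Fin n) K) :
    span K (Set.range M) = span K (M '' (rowSupp M : Set (Fin m))) := by
  classical
  apply le_antisymm
  · rw [span_le]
    rintro - ⟨i, rfl⟩
    by_cases h : ∃ j, M i j ≠ 0
    · exact subset_span ⟨i, rpm_mem_rowSupp.2 h, rfl⟩
    · push_neg at h
      have : M i = 0 := funext fun j => h j
      simp [this]
  · exact span_mono (Set.image_subset_range _ _)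

lemma rpm_rank_le_card_rowSupp {m n : ℕ} (M : Matrix (Fin m) (Fin n) K) :
    M.rank ≤ (rowSupp M).card := by
  classical
  rw [M.rank_eq_finrank_span_row, Matrix.row, rpm_span_range_eq_span_supp]
  have h : (M '' (rowSupp M : Set (Fin m)))
      = (((rowSupp M).image M : Finset (Fin n → K)) : Set (Fin n → K)) := by
    exact Finset.coe_image.symm
  rw [h]
  exact le_trans (finrank_span_finset_le_card _) (Finset.card_image_le)

/-- No column has two nonzero entries. -/
def RPMColInj {m n : ℕ} (M : Matrix (Fin m) (Fin n) K) : Prop :=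
  ∀ p p' q, M p q ≠ 0 → M p' q ≠ 0 → p = p'

lemma rpm_li_rows_of_colInj {m n : ℕ} {M : Matrix (Fin m) (Fin n) K}
    (h : RPMColInj M) : LinearIndependent K (fun i : rowSupp M => M i) := by
  classical
  rw [Fintype.linearIndependent_iff]
  intro g hg i
  obtain ⟨q, hq⟩ := rpm_mem_rowSupp.1 i.2
  have hgq := congrFun hg q
  simp only [Finset.sum_apply, Pi.smul_apply, Pi.zero_apply, smul_eq_mul] at hgq
  rw [Finset.sum_eq_single i] at hgq
  · rcases mul_eq_zero.1 hgq with h' | h'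
    · exact h'
    · exact absurd h' hq
  · intro b _ hb
    have hz : M (b : Fin m) q = 0 := by
      by_contra hb'
      exact hb (Subtype.ext (h _ _ q hb' hq))
    simp [hz]
  · simp

lemma rpm_rank_eq_card_rowSupp {m n : ℕ}
    {M : Matrix (Fin m) (Fin n) K} (h : RPMColInj M) : M.rank = (rowSupp M).card := by
  classical
  apply le_antisymm (rpm_rank_le_card_rowSupp M)
  have hli := rpm_li_rows_of_colInj h
  have hcard := linearIndependent_iff_card_eq_finrank_span.1 hli
  rw [M.rank_eq_finrank_span_row]
  have hrange : Set.range (fun i : rowSupp M => M i) = M '' (rowSupp M : Set (Fin m)) := by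
    ext y; constructor
    · rintro ⟨i, rfl⟩; exact ⟨i, i.2, rfl⟩
    · rintro ⟨i, hi, rfl⟩; exact ⟨⟨i, hi⟩, rfl⟩
  rw [Fintype.card_coe, Set.finrank, hrange] at hcard
  rw [hcard]
  exact finrank_mono (span_mono (Set.image_subset_range _ _))

lemma rpm_colInj_of_subPerm {m n r : ℕ} {R : Matrix (Fin m) (Fin n) K}
    (hN : {p : Fin m × Fin n | R p.1 p.2 ≠ 0}.ncard = r) (hrank : R.rank = r) : RPMColInj R := by
  classical
  set Nf : Finset (Fin m × Fin n) := Finset.univ.filter (fun p => R p.1 p.2 ≠ 0) with hNf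
  have hset : {p : Fin m × Fin n | R p.1 p.2 ≠ 0} = (Nf : Set (Fin m × Fin n)) := by
    ext p; simp [hNf]
  have hNcard : Nf.card = r := by
    rw [hset, Set.ncard_coe_finset] at hN; exact hN
  have himg : Nf.image Prod.snd = rowSupp Rᵀ := by
    ext q
    simp only [Finset.mem_image, rpm_mem_rowSupp, hNf, Finset.mem_filter, Finset.mem_univ,
      true_and, Matrix.transpose_apply]
    constructor
    · rintro ⟨⟨a, b⟩, hab, rfl⟩; exact ⟨a, hab⟩
    · rintro ⟨a, ha⟩; exact ⟨⟨a, q⟩, ha, rfl⟩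
  have hle : r ≤ (Nf.image Prod.snd).card := by
    rw [himg]
    calc r = Rᵀ.rank := by rw [Matrix.rank_transpose, hrank]
    _ ≤ _ := rpm_rank_le_card_rowSupp _
  have hinj : Set.InjOn Prod.snd (Nf : Set (Fin m × Fin n)) := by
    apply Finset.injOn_of_card_image_eq
    exact le_antisymm Finset.card_image_le (hNcard ▸ hle)
  intro p p' q hp hp'
  have h1 : ((p, q) : Fin m × Fin n) ∈ (Nf : Set (Fin m × Fin n)) := by simp [hNf, hp]
  have h2 : ((p', q) : Fin m × Fin n) ∈ (Nf : Set (Fin m × Fin n)) := by simp [hNf, hp']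
  exact (Prod.ext_iff.1 (hinj h1 h2 rfl)).1

lemma rpm_prefix_rank_eq {i j : ℕ} (A : Matrix (Fin i) (Fin j) K)
    {t : ℕ} (ht : t ≤ i) :
    (A.submatrix (Fin.castLE ht) id).rank
      = finrank K (span K (A '' {p : Fin i | (p : ℕ) < t})) := by
  have hr : Set.range (A.submatrix (Fin.castLE ht) id) = A '' {p : Fin i | (p : ℕ) < t} := by
    ext y
    constructor
    · rintro ⟨p, rfl⟩
      exact ⟨Fin.castLE ht p, p.isLt, rfl⟩
    · rintro ⟨p, hp, rfl⟩
      exact ⟨⟨(p : ℕ), hp⟩, rfl⟩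
  rw [Matrix.rank_eq_finrank_span_row, Matrix.row, hr]

lemma rpm_lex_of_pointwise {α : Type*} [LinearOrder α] :
    ∀ (l₁ l₂ : List α), l₁.length = l₂.length →
    (∀ k (h₁ : k < l₁.length) (h₂ : k < l₂.length), l₁.get ⟨k, h₁⟩ ≤ l₂.get ⟨k, h₂⟩) →
    l₁ = l₂ ∨ List.Lex (· < ·) l₁ l₂ := by
  intro l₁
  induction l₁ with
  | nil => intro l₂ hl _; left; exact (List.length_eq_zero_iff.1 hl.symm).symm
  | cons a l ih =>
    intro l₂ hl hp
    cases l₂ with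
    | nil => simp at hl
    | cons b l' =>
      have hab : a ≤ b := hp 0 (by simp) (by simp)
      rcases lt_or_eq_of_le hab with h | h
      · right; exact List.Lex.rel h
      · subst h
        have := ih l' (by simpa using hl)
          (fun k h₁ h₂ => hp (k + 1) (by simpa using h₁) (by simpa using h₂))
        rcases this with h | h
        · left; rw [h]
        · right; exact List.Lex.cons h

lemma rpm_core {K : Type*} [Field K] {i j : ℕ} (A : Matrix (Fin i) (Fin j) K) (S : Finset (Fin i)) (hf : ∀ (t : ℕ) (ht : t ≤ i), (A.submatrix (Fin.castLE ht) id).rank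
      = (S.filter (fun p : Fin i => (p : ℕ) < t)).card) :
    IsRowRP A S := by
  classical
  -- total rank
  have hcard : S.card = A.rank := by
    have := hf i (le_refl i)
    rw [show A.submatrix (Fin.castLE (le_refl i)) id = A from rfl] at this
    rw [this]
    congr 1
    exact (Finset.filter_true_of_mem (fun p _ => p.isLt)).symm
  -- span dimensions
  have hW : ∀ (t : ℕ) (ht : t ≤ i),
      finrank K (span K (A '' {p : Fin i | (p : ℕ) < t}))
        = (S.filter (fun p : Fin i => (p : ℕ) < t)).card := by
    intro t ht
    rw [← rpm_prefix_rank_eq A ht]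
    exact hf t ht
  -- each row is in the span of the S-rows before it
  have hmem : ∀ q : Fin i, A q ∈ span K (A '' {p : Fin i | p ∈ S ∧ (p : ℕ) ≤ (q : ℕ)}) := by
    have key : ∀ N : ℕ, ∀ q : Fin i, (q : ℕ) < N →
        A q ∈ span K (A '' {p : Fin i | p ∈ S ∧ (p : ℕ) ≤ (q : ℕ)}) := by
      intro N
      induction N with
      | zero => intro q hq; omega
      | succ N ih =>
        intro q hq
        by_cases hqS : q ∈ S
        · exact subset_span ⟨q, ⟨hqS, le_refl _⟩, rfl⟩
        · have hle : span K (A '' {p : Fin i | (p : ℕ) < (q : ℕ)})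
              ≤ span K (A '' {p : Fin i | (p : ℕ) < (q : ℕ) + 1}) := by
            apply span_mono; apply Set.image_mono; intro p hp; exact Nat.lt_succ_of_lt hp
          have hfilt : S.filter (fun p : Fin i => (p : ℕ) < (q : ℕ) + 1)
              = S.filter (fun p : Fin i => (p : ℕ) < (q : ℕ)) := by
            apply Finset.filter_congr
            intro p hp
            have hpq : p ≠ q := fun h => hqS (h ▸ hp)
            have hpq' : (p : ℕ) ≠ (q : ℕ) := fun h => hpq (Fin.ext h)
            constructor <;> intro h <;> omega
          have heq : span K (A '' {p : Fin i | (p : ℕ) < (q : ℕ) + 1})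
              = span K (A '' {p : Fin i | (p : ℕ) < (q : ℕ)}) := by
            refine (Submodule.eq_of_le_of_finrank_le hle ?_).symm
            rw [hW _ q.isLt.le, hW _ q.isLt, hfilt]
          have hAq : A q ∈ span K (A '' {p : Fin i | (p : ℕ) < (q : ℕ) + 1}) :=
            subset_span ⟨q, Nat.lt_succ_self _, rfl⟩
          rw [heq] at hAq
          refine span_le.2 ?_ hAq
          rintro - ⟨p, hp, rfl⟩
          have hpN : (p : ℕ) < N := by exact lt_of_lt_of_le hp (by omega)
          have h1 := ih p hpN
          have h2 : span K (A '' {s : Fin i | s ∈ S ∧ (s : ℕ) ≤ (p : ℕ)})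
              ≤ span K (A '' {s : Fin i | s ∈ S ∧ (s : ℕ) ≤ (q : ℕ)}) := by
            apply span_mono
            apply Set.image_mono
            rintro s ⟨hs1, hs2⟩
            have hp' : (p : ℕ) < (q : ℕ) := hp
            exact ⟨hs1, by omega⟩
          exact h2 h1
    intro q
    exact key ((q : ℕ) + 1) q (Nat.lt_succ_self _)
  -- span equality
  have hspan : span K (Set.range A) = span K (A '' (S : Set (Fin i))) := by
    apply le_antisymm
    · rw [span_le]
      rintro - ⟨q, rfl⟩
      exact span_mono (Set.image_mono (f := A) (fun p hp => hp.1)) (hmem q)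
    · exact span_mono (Set.image_subset_range _ _)
  have hrangeS : Set.range (fun p : S => A p) = A '' (S : Set (Fin i)) := by
    ext y; constructor
    · rintro ⟨p, rfl⟩; exact ⟨p, p.2, rfl⟩
    · rintro ⟨p, hp, rfl⟩; exact ⟨⟨p, hp⟩, rfl⟩
  have hli : LinearIndependent K (fun p : S => A p) := by
    rw [linearIndependent_iff_card_eq_finrank_span, Fintype.card_coe, hcard, Set.finrank,
      hrangeS, ← hspan]
    exact Matrix.rank_eq_finrank_span_row A
  refine ⟨hcard, hli, ?_⟩
  intro T hTcard hTli
  have hlen : (S.sort (· ≤ ·)).length = (T.sort (· ≤ ·)).length := by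
    rw [Finset.length_sort, Finset.length_sort, hcard, hTcard]
  have hpoint : ∀ k (h₁ : k < (S.sort (· ≤ ·)).length) (h₂ : k < (T.sort (· ≤ ·)).length),
      (S.sort (· ≤ ·)).get ⟨k, h₁⟩ ≤ (T.sort (· ≤ ·)).get ⟨k, h₂⟩ := by
    intro k h₁ h₂
    set lS := S.sort (· ≤ ·) with hlS
    set lT := T.sort (· ≤ ·) with hlT
    by_contra hcon
    push_neg at hcon
    have hcon' : lT.get ⟨k, h₂⟩ < lS.get ⟨k, h₁⟩ := hcon
    clear hcon
    set b : Fin i := lT.get ⟨k, h₂⟩ with hb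
    have hsortS : lS.Pairwise (· < ·) := (Finset.sortedLT_sort S).pairwise
    have hsortT : lT.Pairwise (· < ·) := (Finset.sortedLT_sort T).pairwise
    -- (a) at most k elements of S are ≤ b
    have ha : (S.filter (fun p : Fin i => (p : ℕ) < (b : ℕ) + 1)).card ≤ k := by
      have hmaps : ∀ p ∈ S.filter (fun p : Fin i => (p : ℕ) < (b : ℕ) + 1),
          (fun p : Fin i => lS.idxOf p) p ∈ Finset.range k := by
        intro p hp
        obtain ⟨hpS, hpb⟩ := Finset.mem_filter.1 hp
        have hmemp : p ∈ lS := (Finset.mem_sort (· ≤ ·)).2 hpS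
        have hidx : lS.idxOf p < lS.length := List.idxOf_lt_length_iff.2 hmemp
        rw [Finset.mem_range]
        by_contra hkle
        push_neg at hkle
        have hgetle : lS.get ⟨k, h₁⟩ ≤ lS.get ⟨lS.idxOf p, hidx⟩ := by
          rcases eq_or_lt_of_le hkle with h | h
          · exact le_of_eq (by congr 1; exact Fin.ext h)
          · exact le_of_lt (hsortS.rel_get_of_lt h)
        rw [List.idxOf_get hidx] at hgetle
        have hx1 := Fin.le_def.1 hgetle
        have hx2 := Fin.lt_def.1 hcon'
        omega
      have hinj : Set.InjOn (fun p : Fin i => lS.idxOf p)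
          (S.filter (fun p : Fin i => (p : ℕ) < (b : ℕ) + 1) : Finset (Fin i)) := by
        intro p hp p' hp' he
        have hp1 : p ∈ lS := (Finset.mem_sort (· ≤ ·)).2 (Finset.mem_filter.1 hp).1
        have hp2 : p' ∈ lS := (Finset.mem_sort (· ≤ ·)).2 (Finset.mem_filter.1 hp').1
        have e1 := List.idxOf_get (List.idxOf_lt_length_iff.2 hp1)
        have e2 := List.idxOf_get (List.idxOf_lt_length_iff.2 hp2)
        rw [← e1, ← e2]
        congr 1
        exact Fin.ext he
      simpa using Finset.card_le_card_of_injOn _ hmaps hinj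
    -- (b) at least k+1 elements of T are ≤ b
    have hbcard : k + 1 ≤ (T.filter (fun p : Fin i => (p : ℕ) < (b : ℕ) + 1)).card := by
      have hmaps : ∀ x ∈ Finset.range (k + 1),
          (fun x : ℕ => lT.getD x b) x ∈ T.filter (fun p : Fin i => (p : ℕ) < (b : ℕ) + 1) := by
        intro x hx
        rw [Finset.mem_range] at hx
        have hxlen : x < lT.length := lt_of_le_of_lt (Nat.lt_succ_iff.1 hx) h₂
        show lT.getD x b ∈ _
        rw [List.getD_eq_getElem lT b hxlen]
        rw [show lT[x] = lT.get ⟨x, hxlen⟩ from rfl]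
        refine Finset.mem_filter.2 ⟨(Finset.mem_sort (· ≤ ·)).1 (lT.get_mem _), ?_⟩
        have hle : lT.get ⟨x, hxlen⟩ ≤ b := by
          rcases eq_or_lt_of_le (Nat.lt_succ_iff.1 hx) with h | h
          · exact le_of_eq (by rw [hb]; congr 1; exact Fin.ext h)
          · exact le_of_lt (hsortT.rel_get_of_lt h)
        have := Fin.le_def.1 hle
        omega
      have hinj : Set.InjOn (fun x : ℕ => lT.getD x b) (Finset.range (k + 1)) := by
        intro x hx y hy he
        have hx' : x < k + 1 := by simpa using hx
        have hy' : y < k + 1 := by simpa using hy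
        have hxlen : x < lT.length := lt_of_le_of_lt (Nat.lt_succ_iff.1 hx') h₂
        have hylen : y < lT.length := lt_of_le_of_lt (Nat.lt_succ_iff.1 hy') h₂
        have he' : lT.get ⟨x, hxlen⟩ = lT.get ⟨y, hylen⟩ := by
          have hh : lT.getD x b = lT.getD y b := he
          rwa [List.getD_eq_getElem lT b hxlen, List.getD_eq_getElem lT b hylen] at hh
        by_contra hne
        rcases Nat.lt_or_ge x y with h | h
        · exact absurd he' (ne_of_lt (hsortT.rel_get_of_lt h))
        · rcases eq_or_lt_of_le h with h' | h'
          · exact hne h'.symm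
          · exact absurd he'.symm (ne_of_lt (hsortT.rel_get_of_lt h'))
      simpa using Finset.card_le_card_of_injOn _ hmaps hinj
    -- rank of the (b+1)-prefix
    have hbi : (b : ℕ) + 1 ≤ i := b.isLt
    -- LI of the rows of T below b+1
    have hTli' : LinearIndependent K
        (fun p : (T.filter (fun p : Fin i => (p : ℕ) < (b : ℕ) + 1) : Finset (Fin i)) => A p) := by
      have hcomp : (fun p : (T.filter (fun p : Fin i => (p : ℕ) < (b : ℕ) + 1) : Finset (Fin i)) => A p)
          = (fun p : T => A p) ∘ (fun p => ⟨p.1, (Finset.mem_filter.1 p.2).1⟩) := rfl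
      rw [hcomp]
      refine hTli.comp _ (fun x y hxy => ?_)
      apply Subtype.ext
      have := congrArg (fun z : {a // a ∈ T} => (z : Fin i)) hxy
      simpa using this
    have hrangeT : Set.range
        (fun p : (T.filter (fun p : Fin i => (p : ℕ) < (b : ℕ) + 1) : Finset (Fin i)) => A p)
        = A '' ((T.filter (fun p : Fin i => (p : ℕ) < (b : ℕ) + 1) : Finset (Fin i)) : Set (Fin i)) := by
      ext y; constructor
      · rintro ⟨p, rfl⟩; exact ⟨p, p.2, rfl⟩
      · rintro ⟨p, hp, rfl⟩; exact ⟨⟨p, hp⟩, rfl⟩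
    have hfinT := linearIndependent_iff_card_eq_finrank_span.1 hTli'
    rw [Fintype.card_coe, Set.finrank, hrangeT] at hfinT
    have hmono : finrank K (span K (A '' ((T.filter (fun p : Fin i => (p : ℕ) < (b : ℕ) + 1) : Finset (Fin i)) : Set (Fin i))))
        ≤ finrank K (span K (A '' {p : Fin i | (p : ℕ) < (b : ℕ) + 1})) := by
      apply finrank_mono
      apply span_mono
      apply Set.image_mono
      intro p hp
      exact (Finset.mem_filter.1 hp).2
    have hfinal := hf ((b : ℕ) + 1) hbi
    rw [rpm_prefix_rank_eq A hbi] at hfinal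
    omega
  rcases rpm_lex_of_pointwise _ _ hlen hpoint with h | h
  · left
    have h2 : (S.sort (· ≤ ·)).toFinset = (T.sort (· ≤ ·)).toFinset := by rw [h]
    rwa [Finset.sort_toFinset, Finset.sort_toFinset] at h2
  · right; exact h


lemma rpm_colInj_leadSub {m n i j : ℕ} {R : Matrix (Fin m) (Fin n) K}
    (h : RPMColInj R) (hi : i ≤ m) (hj : j ≤ n) : RPMColInj (leadSub R hi hj) := by
  intro p p' q hp hp'
  have heq := h (Fin.castLE hi p) (Fin.castLE hi p') (Fin.castLE hj q) hp hp'
  have hval : (Fin.castLE hi p).val = (Fin.castLE hi p').val := congrArg Fin.val heq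
  exact Fin.ext hval

lemma rpm_card_rowSupp_lead {m n : ℕ} (R : Matrix (Fin m) (Fin n) K)
    {i j t : ℕ} (hi : i ≤ m) (hj : j ≤ n) (ht : t ≤ i) :
    (rowSupp (leadSub R (ht.trans hi) hj)).card
      = ((rowSupp (leadSub R hi hj)).filter (fun p : Fin i => (p : ℕ) < t)).card := by
  classical
  have hinj : Function.Injective (Fin.castLE ht) := by
    intro a b h
    have hval : (Fin.castLE ht a).val = (Fin.castLE ht b).val := congrArg Fin.val h
    exact Fin.ext hval
  rw [← Finset.card_image_of_injective _ hinj]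
  congr 1
  ext p'
  simp only [Finset.mem_image, Finset.mem_filter, rpm_mem_rowSupp]
  constructor
  · rintro ⟨p, ⟨q, hq⟩, rfl⟩
    exact ⟨⟨q, hq⟩, p.isLt⟩
  · rintro ⟨⟨q, hq⟩, hpt⟩
    exact ⟨⟨(p' : ℕ), hpt⟩, ⟨q, hq⟩, Fin.ext rfl⟩

end RPMAux

/-- the row rank profile of any leading submatrix of A is the row support of
the corresponding leading submatrix of the rank profile matrix of A. -/
theorem stmt6 {K : Type*} [Field K] {m n : ℕ} (A R : Matrix (Fin m) (Fin n) K)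
    (hR : IsRPM A R) :
    ∀ (i j : ℕ) (hi : i ≤ m) (hj : j ≤ n),
      IsRowRP (leadSub A hi hj) (rowSupp (leadSub R hi hj)) := by
  intro i j hi hj
  obtain ⟨⟨h01, hN, hrank⟩, hlead⟩ := hR
  have hci : RPMColInj R := rpm_colInj_of_subPerm hN hrank
  apply rpm_core
  intro t ht
  have e1 : (leadSub A hi hj).submatrix (Fin.castLE ht) id = leadSub A (ht.trans hi) hj := rfl
  have e2 : (leadSub R hi hj).submatrix (Fin.castLE ht) id = leadSub R (ht.trans hi) hj := rfl
  rw [e1, ← hlead t j (ht.trans hi) hj]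
  rw [rpm_rank_eq_card_rowSupp (rpm_colInj_leadSub hci (ht.trans hi) hj)]
  exact rpm_card_rowSupp_lead R hi hj ht
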